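/- Let f_1,…,f_ℓ, g and f'_1,…,f'_ℓ, g' be polynomials over F_q with max_i deg f_i < d_f, max_i deg f'_i < d_f, deg g < d_g, deg g' < d_g, gcd(f_1,…,f_ℓ,g) = 1, gcd(f'_1,…,f'_ℓ,g') = 1, and suppose L = Σ_j λ_j ≥ d_f + d_g − 1. If the multi-precision encodings of f/g and f'/g' agree at all points α_1,…,α_n with multiplicities λ_1,…,λ_n (i.e., for each j, ν_{α_j}(g) = ν_{α_j}(g') and f/(g/(x−α_j)^{ν_{α_j}(g)}) ≡ f'/(g'/(x−α_j)^{ν_{α_j}(g')}) mod (x−α_j)^{λ_j − ν_{α_j}(g)}), then f_i·g' = f'_i·g for all i, i.e., f/g = f'/g' as vectors of rational functions. -/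

import Mathlib

open Polynomial

/-- Injectivity of the multi-precision encoding: if the encodings of the reduced vectors `f/g`
and `f'/g'` agree at all points (same valuations of denominators, and equal shifted reductions
modulo `(x − α_j)^{λ_j − ν_{α_j}(g)}`), and `L ≥ d_f + d_g − 1`, then `f/g = f'/g'`. -/
theorem multiprecision_encoding_injective {F : Type*} [Field F] [Fintype F] [DecidableEq F]
    (n ℓ : ℕ)
    (α : Fin n → F) (hα : Function.Injective α)
    (lam : Fin n → ℕ) (hlam : ∀ j, 0 < lam j)
    (L : ℕ) (hL : L = ∑ j, lam j)
    (df dg : ℕ) (hdf : 0 < df) (hdg : 0 < dg)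
    (hLd : df + dg - 1 ≤ L)
    (f f' : Fin ℓ → F[X]) (g g' : F[X]) (hg : g ≠ 0) (hg' : g' ≠ 0)
    (hdegf : ∀ i, (f i).degree < (df : ℕ)) (hdegf' : ∀ i, (f' i).degree < (df : ℕ))
    (hdegg : g.degree < (dg : ℕ)) (hdegg' : g'.degree < (dg : ℕ))
    (hred : gcd (Finset.univ.gcd f) g = 1) (hred' : gcd (Finset.univ.gcd f') g' = 1)
    -- the valuation parts of the encodings agree
    (hval : ∀ j, rootMultiplicity (α j) g' = rootMultiplicity (α j) g)
    -- the reduction parts of the encodings agree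
    (henc : ∀ (j : Fin n) (i : Fin ℓ),
      (Ideal.Quotient.mk
          (Ideal.span {(X - C (α j)) ^ (lam j - rootMultiplicity (α j) g)}) (f i)) *
        Ring.inverse (Ideal.Quotient.mk
          (Ideal.span {(X - C (α j)) ^ (lam j - rootMultiplicity (α j) g)})
          (g / (X - C (α j)) ^ (rootMultiplicity (α j) g)))
      = (Ideal.Quotient.mk
          (Ideal.span {(X - C (α j)) ^ (lam j - rootMultiplicity (α j) g)}) (f' i)) *
        Ring.inverse (Ideal.Quotient.mk
          (Ideal.span {(X - C (α j)) ^ (lam j - rootMultiplicity (α j) g)})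
          (g' / (X - C (α j)) ^ (rootMultiplicity (α j) g)))) :
    ∀ i, f i * g' = f' i * g := by
  intro i
  rw [← sub_eq_zero]
  set h : F[X] := f i * g' - f' i * g with hh
  by_contra h0
  -- divisibility at each point
  have key : ∀ j, (X - C (α j)) ^ (lam j) ∣ h := by
    intro j
    set ν := rootMultiplicity (α j) g with hν
    have hg1 : (X - C (α j)) ^ ν ∣ g := pow_rootMultiplicity_dvd g (α j)
    have hg2 : (X - C (α j)) ^ ν ∣ g' := by
      have := pow_rootMultiplicity_dvd g' (α j); rwa [hval j] at this
    by_cases hcase : lam j ≤ ν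
    · have hd : (X - C (α j)) ^ (lam j) ∣ (X - C (α j)) ^ ν := pow_dvd_pow _ hcase
      exact dvd_sub (dvd_mul_of_dvd_right (hd.trans hg2) _)
        (dvd_mul_of_dvd_right (hd.trans hg1) _)
    push_neg at hcase
    set k := lam j - ν with hk
    set p : F[X] := X - C (α j) with hp
    set I := Ideal.span {p ^ k} with hI
    have hpne : p ≠ 0 := X_sub_C_ne_zero _
    have hmon : (p ^ ν).Monic := (monic_X_sub_C _).pow ν
    have hgdiv : p ^ ν * (g / p ^ ν) = g :=
      EuclideanDomain.mul_div_cancel' (pow_ne_zero _ hpne) hg1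
    have hgdiv' : p ^ ν * (g' / p ^ ν) = g' :=
      EuclideanDomain.mul_div_cancel' (pow_ne_zero _ hpne) hg2
    -- p does not divide the reduced denominators
    have hnd : ¬ p ∣ (g / p ^ ν) := by
      rw [hp, dvd_iff_isRoot]
      have := eval_divByMonic_pow_rootMultiplicity_ne_zero (p := g) (α j) hg
      rwa [divByMonic_eq_div _ hmon] at this
    have hnd' : ¬ p ∣ (g' / p ^ ν) := by
      rw [hp, dvd_iff_isRoot]
      have := eval_divByMonic_pow_rootMultiplicity_ne_zero (p := g') (α j) hg'
      rwa [hval j, ← hν, divByMonic_eq_div _ hmon] at this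
    have hirr : Irreducible p := irreducible_X_sub_C (α j)
    have hcop : IsCoprime (p ^ k) (g / p ^ ν) :=
      ((hirr.isCoprime_or_dvd _).resolve_right hnd).pow_left
    have hcop' : IsCoprime (p ^ k) (g' / p ^ ν) :=
      ((hirr.isCoprime_or_dvd _).resolve_right hnd').pow_left
    -- units in the quotient
    have hunit : ∀ q : F[X], IsCoprime (p ^ k) q → IsUnit (Ideal.Quotient.mk I q) := by
      intro q hq
      obtain ⟨a, b, hab⟩ := hq
      refine IsUnit.of_mul_eq_one (Ideal.Quotient.mk I b) ?_
      have hz : (Ideal.Quotient.mk I) (p ^ k) = 0 :=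
        Ideal.Quotient.eq_zero_iff_mem.mpr (Ideal.subset_span rfl)
      have := congrArg (Ideal.Quotient.mk I) hab
      rw [map_add, map_one, map_mul, map_mul, hz, mul_zero, zero_add] at this
      rw [mul_comm]; exact this

    have hu := hunit _ hcop
    have hu' := hunit _ hcop'
    have e := henc j i
    set u := Ideal.Quotient.mk I (g / p ^ ν) with hu1
    set u' := Ideal.Quotient.mk I (g' / p ^ ν) with hu2
    have h1 : Ring.inverse u * u = 1 := Ring.inverse_mul_cancel _ hu
    have h2 : Ring.inverse u' * u' = 1 := Ring.inverse_mul_cancel _ hu'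
    have e2 : Ideal.Quotient.mk I (f i) * u' = Ideal.Quotient.mk I (f' i) * u := by
      linear_combination (u * u') * e - (Ideal.Quotient.mk I (f i) * u') * h1
        + (Ideal.Quotient.mk I (f' i) * u) * h2
    rw [← map_mul, ← map_mul, Ideal.Quotient.eq] at e2
    rw [Ideal.mem_span_singleton] at e2
    have hdvd : p ^ ν * p ^ k ∣ p ^ ν * (f i * (g' / p ^ ν) - f' i * (g / p ^ ν)) :=
      mul_dvd_mul_left _ e2
    have heq : h = p ^ ν * (f i * (g' / p ^ ν) - f' i * (g / p ^ ν)) := by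
      rw [hh]
      conv_lhs => rw [← hgdiv, ← hgdiv']
      ring
    rw [← pow_add] at hdvd
    have hνk : ν + k = lam j := by omega
    rw [hνk] at hdvd
    rwa [← heq] at hdvd
  -- product divides h
  have hprod : (∏ j, (X - C (α j)) ^ lam j) ∣ h :=
    Fintype.prod_dvd_of_coprime
      (fun a b hab => (pairwise_coprime_X_sub_C hα hab).pow) key
  have hdegprod : (∏ j, (X - C (α j)) ^ lam j).natDegree = L := by
    rw [hL, natDegree_prod _ _ (fun j _ => pow_ne_zero _ (X_sub_C_ne_zero _))]
    simp [natDegree_pow]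
  have hle : L ≤ h.natDegree := hdegprod ▸ natDegree_le_of_dvd hprod h0
  -- degree bound
  have hnd : ∀ (q : F[X]) (d : ℕ), 0 < d → q.degree < (d : ℕ) → q.natDegree < d := by
    intro q d hd hqd
    by_cases hq : q = 0
    · simpa [hq]
    · exact (natDegree_lt_iff_degree_lt hq).mpr hqd
  have b1 := hnd _ _ hdf (hdegf i)
  have b2 := hnd _ _ hdf (hdegf' i)
  have b3 := hnd _ _ hdg hdegg
  have b4 := hnd _ _ hdg hdegg'
  have hb : h.natDegree ≤ max ((f i * g').natDegree) ((f' i * g).natDegree) :=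
    natDegree_sub_le _ _
  have hb1 : (f i * g').natDegree ≤ (f i).natDegree + g'.natDegree := natDegree_mul_le
  have hb2 : (f' i * g).natDegree ≤ (f' i).natDegree + g.natDegree := natDegree_mul_le
  omega
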